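/- Let x, y be distinct roots with x dom y and y elementary (y dominates no positive root other than itself). Then: (i) r_y x is a positive root; (ii) (r_y x, x) ≤ -1 and (r_y x, y) ≤ -1, so r_y x dominates neither x nor y. -/

import Mathlib

open Real

variable {V : Type*} [AddCommGroup V] [Module ℝ V]

/-- The set of positive linear combinations of a set `A`. -/
def PLC (A : Set V) : Set V :=
  {v | ∃ (s : Finset V) (c : V → ℝ), (↑s : Set V) ⊆ A ∧ (∀ x ∈ s, 0 ≤ c x) ∧
    (∃ x ∈ s, 0 < c x) ∧ v = ∑ x ∈ s, c x • x}

/-- A Coxeter datum (Krammer): a root basis `Pi` in `V` with bilinear form `B`. -/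
structure CoxeterDatum (V : Type*) [AddCommGroup V] [Module ℝ V] where
  B : LinearMap.BilinForm ℝ V
  Pi : Set V
  norm_one : ∀ a ∈ Pi, B a a = 1
  symm : ∀ a ∈ Pi, ∀ b ∈ Pi, B a b = B b a
  offdiag : ∀ a ∈ Pi, ∀ b ∈ Pi, a ≠ b →
    (∃ m : ℕ, 2 ≤ m ∧ B a b = -Real.cos (Real.pi / m)) ∨ B a b ≤ -1
  zero_not_plc : (0 : V) ∉ PLC Pi

namespace CoxeterDatum

variable (D : CoxeterDatum V)

/-- The reflection in the vector `a`, as a linear endomorphism of `V`. -/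
noncomputable def refl (a : V) : Module.End ℝ V where
  toFun x := x - (2 * D.B x a) • a
  map_add' x y := by simp only [map_add, LinearMap.add_apply]; module
  map_smul' c x := by simp only [map_smul, LinearMap.smul_apply, smul_eq_mul,
    RingHom.id_apply]; module

/-- The set of simple reflections, as invertible endomorphisms of `V`. -/
def simples : Set (Module.End ℝ V)ˣ :=
  {u | ∃ a ∈ D.Pi, (u : Module.End ℝ V) = D.refl a}

/-- The Coxeter group `W`, realized as the group generated by the simple reflections. -/
noncomputable def Wgrp : Subgroup (Module.End ℝ V)ˣ := Subgroup.closure D.simples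

/-- The root system. -/
def roots : Set V :=
  {x | ∃ w ∈ D.Wgrp, ∃ a ∈ D.Pi, x = (w : Module.End ℝ V) a}

/-- The positive roots. -/
def posRoots : Set V := D.roots ∩ PLC D.Pi

/-- The negative roots. -/
def negRoots : Set V := {x | -x ∈ D.posRoots}

/-- The length of an element of `W` with respect to the simple reflections. -/
noncomputable def len (w : (Module.End ℝ V)ˣ) : ℕ :=
  sInf {n | ∃ l : List (Module.End ℝ V)ˣ,
    l.length = n ∧ (∀ u ∈ l, u ∈ D.simples) ∧ l.prod = w}

/-- The depth of a root. -/
noncomputable def dp (x : V) : ℕ :=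
  sInf {n | ∃ w ∈ D.Wgrp, D.len w = n ∧ (w : Module.End ℝ V) x ∈ D.negRoots}

/-- Dominance: `x` dominates `y` if every `w ∈ W` making `x` negative makes `y` negative. -/
def dom (x y : V) : Prop :=
  ∀ w ∈ D.Wgrp, (w : Module.End ℝ V) x ∈ D.negRoots → (w : Module.End ℝ V) y ∈ D.negRoots

/-- `D(x)`: the set of positive roots other than `x` dominated by `x`. -/
def DSet (x : V) : Set V := {y | y ∈ D.posRoots ∧ y ≠ x ∧ D.dom x y}

/-- `D_n`: the set of positive roots dominating exactly `n` other positive roots. -/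
def Dn (n : ℕ) : Set V :=
  {x | x ∈ D.posRoots ∧ (D.DSet x).Finite ∧ (D.DSet x).ncard = n}

/-- The set of reflections of `W`. -/
def TSet : Set (Module.End ℝ V)ˣ :=
  {t | ∃ w ∈ D.Wgrp, ∃ s ∈ D.simples, t = w * s * w⁻¹}

/-- `N(w)`: the set of positive roots sent to negative roots by `w`. -/
def NSet (w : (Module.End ℝ V)ˣ) : Set V :=
  {z | z ∈ D.posRoots ∧ (w : Module.End ℝ V) z ∈ D.negRoots}

/-- `N̄(w)`: the reflections `t` with `ℓ(wt) < ℓ(w)`. -/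
def Nbar (w : (Module.End ℝ V)ˣ) : Set (Module.End ℝ V)ˣ :=
  {t | t ∈ D.TSet ∧ D.len (w * t) < D.len w}

/-- The canonical generators of a reflection subgroup `W'`. -/
def canGens (W' : Subgroup (Module.End ℝ V)ˣ) : Set (Module.End ℝ V)ˣ :=
  {t | t ∈ D.TSet ∧ D.Nbar t ∩ (W' : Set (Module.End ℝ V)ˣ) = {t}}

/-- `S(x)`: elements of `W` of minimal length sending `x` into `Π` (inverse-wise). -/
def SSet (x : V) : Set (Module.End ℝ V)ˣ :=
  {w | w ∈ D.Wgrp ∧ D.len w = D.dp x - 1 ∧ ((w⁻¹ : (Module.End ℝ V)ˣ) : Module.End ℝ V) x ∈ D.Pi}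

end CoxeterDatum

section Infra

variable {V : Type*} [AddCommGroup V] [Module ℝ V]

namespace PLC

variable {A : Set V}

lemma mem_of_mem {a : V} (ha : a ∈ A) : a ∈ PLC A :=
  ⟨{a}, fun _ => 1, by simpa using ha, by simp, ⟨a, by simp⟩, by simp⟩

lemma add {u v : V} (hu : u ∈ PLC A) (hv : v ∈ PLC A) : u + v ∈ PLC A := by
  classical
  obtain ⟨s, c, hs, hc, ⟨p, hp, hp'⟩, rfl⟩ := hu
  obtain ⟨t, d, ht, hd, ⟨q, hq, hq'⟩, rfl⟩ := hv
  have e1 : ∑ x ∈ s ∪ t, (if x ∈ s then c x else 0) • x = ∑ x ∈ s, c x • x := by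
    rw [← Finset.sum_subset Finset.subset_union_left
      (fun x _ hx => by rw [if_neg hx, zero_smul])]
    exact Finset.sum_congr rfl fun x hx => by rw [if_pos hx]
  have e2 : ∑ x ∈ s ∪ t, (if x ∈ t then d x else 0) • x = ∑ x ∈ t, d x • x := by
    rw [← Finset.sum_subset Finset.subset_union_right
      (fun x _ hx => by rw [if_neg hx, zero_smul])]
    exact Finset.sum_congr rfl fun x hx => by rw [if_pos hx]
  refine ⟨s ∪ t, fun x => (if x ∈ s then c x else 0) + (if x ∈ t then d x else 0),
    ?_, ?_, ?_, ?_⟩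
  · intro x hx
    rcases Finset.mem_union.1 (by exact_mod_cast hx) with h | h
    exacts [hs h, ht h]
  · intro x _
    dsimp only
    have h1 : (0:ℝ) ≤ (if x ∈ s then c x else 0) := by
      split_ifs with h; exacts [hc x h, le_rfl]
    have h2 : (0:ℝ) ≤ (if x ∈ t then d x else 0) := by
      split_ifs with h; exacts [hd x h, le_rfl]
    linarith
  · refine ⟨p, Finset.mem_union_left _ hp, ?_⟩
    dsimp only
    have h2 : (0:ℝ) ≤ (if p ∈ t then d p else 0) := by
      split_ifs with h; exacts [hd p h, le_rfl]
    rw [if_pos hp]; linarith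
  · rw [← e1, ← e2, ← Finset.sum_add_distrib]
    exact Finset.sum_congr rfl fun x _ => (add_smul _ _ _).symm

lemma smul {u : V} {t : ℝ} (ht : 0 < t) (hu : u ∈ PLC A) : t • u ∈ PLC A := by
  obtain ⟨s, c, hs, hc, ⟨p, hp, hp'⟩, rfl⟩ := hu
  refine ⟨s, fun x => t * c x, hs, fun x hx => mul_nonneg ht.le (hc x hx),
    ⟨p, hp, mul_pos ht hp'⟩, ?_⟩
  rw [Finset.smul_sum]
  exact Finset.sum_congr rfl fun x _ => (mul_smul _ _ _).symm

lemma combo {u v : V} {α β : ℝ} (hu : u ∈ PLC A) (hv : v ∈ PLC A)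
    (hα : 0 ≤ α) (hβ : 0 ≤ β) (hne : ¬(α = 0 ∧ β = 0)) : α • u + β • v ∈ PLC A := by
  rcases eq_or_lt_of_le hα with h1 | h1
  · rcases eq_or_lt_of_le hβ with h2 | h2
    · exact absurd ⟨h1.symm, h2.symm⟩ hne
    · rw [← h1, zero_smul, zero_add]; exact smul h2 hv
  · rcases eq_or_lt_of_le hβ with h2 | h2
    · rw [← h2, zero_smul, add_zero]; exact smul h1 hu
    · exact add (smul h1 hu) (smul h2 hv)

lemma subset_span : PLC A ⊆ Submodule.span ℝ A := by
  rintro v ⟨s, c, hs, -, -, rfl⟩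
  exact Submodule.sum_mem _ fun x hx =>
    Submodule.smul_mem _ _ (Submodule.subset_span (hs hx))

end PLC

namespace CoxeterDatum

variable (D : CoxeterDatum V)

lemma not_neg_mem_plc {v : V} (hv : v ∈ PLC D.Pi) : -v ∉ PLC D.Pi := fun h =>
  D.zero_not_plc (by simpa using PLC.add hv h)

lemma plc_ne_zero {v : V} (hv : v ∈ PLC D.Pi) : v ≠ 0 := by
  rintro rfl; exact D.zero_not_plc hv

lemma pos_neg_disjoint {v : V} (hv : v ∈ D.posRoots) : v ∉ D.negRoots := fun h =>
  D.not_neg_mem_plc hv.2 h.2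

/-- The span of the simple roots. -/
def SpanPi : Submodule ℝ V := Submodule.span ℝ D.Pi

lemma symm_span : ∀ u ∈ D.SpanPi, ∀ v ∈ D.SpanPi, D.B u v = D.B v u := by
  intro u hu
  refine Submodule.span_induction ?_ (by simp) ?_ ?_ hu
  · intro a ha v hv
    refine Submodule.span_induction ?_ (by simp) ?_ ?_ hv
    · intro b hb; exact D.symm a ha b hb
    · intro x y _ _ h1 h2; simp [map_add, h1, h2]
    · intro t x _ h; simp [map_smul, h]
  · intro x y _ _ h1 h2 v hv; simp [map_add, h1 v hv, h2 v hv]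
  · intro t x _ h v hv; simp [map_smul, h v hv]

lemma refl_apply (a x : V) : D.refl a x = x - (2 * D.B x a) • a := rfl

lemma refl_refl {a : V} (ha : D.B a a = 1) (x : V) : D.refl a (D.refl a x) = x := by
  simp only [refl_apply, map_sub, map_smul, LinearMap.sub_apply, LinearMap.smul_apply,
    smul_eq_mul, ha]
  module

/-- The reflection in a unit-norm vector, as a unit. -/
noncomputable def reflUnit {a : V} (ha : D.B a a = 1) : (Module.End ℝ V)ˣ :=
  ⟨D.refl a, D.refl a, LinearMap.ext fun x => D.refl_refl ha x,
    LinearMap.ext fun x => D.refl_refl ha x⟩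

@[simp] lemma reflUnit_coe {a : V} (ha : D.B a a = 1) :
    ((D.reflUnit ha : (Module.End ℝ V)ˣ) : Module.End ℝ V) = D.refl a := rfl

lemma reflUnit_mem {a : V} (ha : a ∈ D.Pi) :
    D.reflUnit (D.norm_one a ha) ∈ D.Wgrp :=
  Subgroup.subset_closure ⟨a, ha, rfl⟩

lemma reflUnit_self {a : V} (ha : D.B a a = 1) :
    ((D.reflUnit ha : (Module.End ℝ V)ˣ) : Module.End ℝ V) a = -a := by
  show D.refl a a = -a
  rw [refl_apply, ha]; module

end CoxeterDatum

end Infra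
section Infra2

variable {V : Type*} [AddCommGroup V] [Module ℝ V]

namespace CoxeterDatum

variable (D : CoxeterDatum V)

local notation "æ" w => ((w : (Module.End ℝ V)ˣ) : Module.End ℝ V)

lemma simple_coe {s : (Module.End ℝ V)ˣ} (hs : s ∈ D.simples) :
    ∃ a, ∃ ha : a ∈ D.Pi, s = D.reflUnit (D.norm_one a ha) := by
  obtain ⟨a, ha, hcoe⟩ := hs
  exact ⟨a, ha, Units.ext hcoe⟩

lemma simple_sq {s : (Module.End ℝ V)ˣ} (hs : s ∈ D.simples) : s * s = 1 := by
  obtain ⟨a, ha, rfl⟩ := D.simple_coe hs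
  refine Units.ext (LinearMap.ext fun x => ?_)
  exact D.refl_refl (D.norm_one a ha) x

lemma simple_inv {s : (Module.End ℝ V)ˣ} (hs : s ∈ D.simples) : s⁻¹ = s :=
  inv_eq_of_mul_eq_one_left (D.simple_sq hs)

lemma wq {w : (Module.End ℝ V)ˣ} (hw : w ∈ D.Wgrp) :
    (∀ u ∈ D.SpanPi, (w : Module.End ℝ V) u ∈ D.SpanPi ∧
      ((w⁻¹ : (Module.End ℝ V)ˣ) : Module.End ℝ V) u ∈ D.SpanPi) ∧
    (∀ v : V, ∀ u ∈ D.SpanPi,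
      D.B ((w : Module.End ℝ V) v) u
        = D.B v (((w⁻¹ : (Module.End ℝ V)ˣ) : Module.End ℝ V) u) ∧
      D.B (((w⁻¹ : (Module.End ℝ V)ˣ) : Module.End ℝ V) v) u
        = D.B v ((w : Module.End ℝ V) u)) := by
  induction hw using Subgroup.closure_induction with
  | mem s hs =>
    obtain ⟨a, ha, rfl⟩ := D.simple_coe hs
    have hinv : (D.reflUnit (D.norm_one a ha))⁻¹ = D.reflUnit (D.norm_one a ha) :=
      D.simple_inv ⟨a, ha, rfl⟩
    rw [hinv]
    have haS : a ∈ D.SpanPi := Submodule.subset_span ha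
    have hmem : ∀ u ∈ D.SpanPi, D.refl a u ∈ D.SpanPi := by
      intro u hu
      rw [refl_apply]
      exact Submodule.sub_mem _ hu (Submodule.smul_mem _ _ haS)
    have hadj : ∀ v : V, ∀ u ∈ D.SpanPi, D.B (D.refl a v) u = D.B v (D.refl a u) := by
      intro v u hu
      simp only [refl_apply, map_sub, map_smul, LinearMap.sub_apply, LinearMap.smul_apply,
        smul_eq_mul]
      rw [D.symm_span a haS u hu]
      ring
    exact ⟨fun u hu => ⟨hmem u hu, hmem u hu⟩, fun v u hu => ⟨hadj v u hu, hadj v u hu⟩⟩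
  | one => simp
  | mul x y hx hy ihx ihy =>
    constructor
    · intro u hu
      rw [mul_inv_rev]
      simp only [Units.val_mul, Module.End.mul_apply]
      exact ⟨(ihx.1 _ (ihy.1 u hu).1).1, (ihy.1 _ (ihx.1 u hu).2).2⟩
    · intro v u hu
      rw [mul_inv_rev]
      simp only [Units.val_mul, Module.End.mul_apply]
      constructor
      · rw [(ihx.2 _ u hu).1, (ihy.2 _ _ (ihx.1 u hu).2).1]
      · rw [(ihy.2 _ u hu).2, (ihx.2 _ _ (ihy.1 u hu).1).2]
  | inv x hx ihx =>
    constructor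
    · intro u hu
      rw [inv_inv]
      exact ⟨(ihx.1 u hu).2, (ihx.1 u hu).1⟩
    · intro v u hu
      rw [inv_inv]
      exact ⟨(ihx.2 v u hu).2, (ihx.2 v u hu).1⟩

lemma apply_mem_span {w : (Module.End ℝ V)ˣ} (hw : w ∈ D.Wgrp) {u : V}
    (hu : u ∈ D.SpanPi) : (w : Module.End ℝ V) u ∈ D.SpanPi :=
  ((D.wq hw).1 u hu).1

lemma inv_apply_apply (w : (Module.End ℝ V)ˣ) (v : V) :
    ((w⁻¹ : (Module.End ℝ V)ˣ) : Module.End ℝ V) ((w : Module.End ℝ V) v) = v := by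
  have h : ((w⁻¹ : (Module.End ℝ V)ˣ) : Module.End ℝ V) * (w : Module.End ℝ V) = 1 := by
    rw [← Units.val_mul, inv_mul_cancel, Units.val_one]
  exact LinearMap.congr_fun h v

lemma apply_inv_apply (w : (Module.End ℝ V)ˣ) (v : V) :
    (w : Module.End ℝ V) (((w⁻¹ : (Module.End ℝ V)ˣ) : Module.End ℝ V) v) = v := by
  have h : (w : Module.End ℝ V) * ((w⁻¹ : (Module.End ℝ V)ˣ) : Module.End ℝ V) = 1 := by
    rw [← Units.val_mul, mul_inv_cancel, Units.val_one]
  exact LinearMap.congr_fun h v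

lemma B_invariant {w : (Module.End ℝ V)ˣ} (hw : w ∈ D.Wgrp) (v : V) {u : V}
    (hu : u ∈ D.SpanPi) :
    D.B ((w : Module.End ℝ V) v) ((w : Module.End ℝ V) u) = D.B v u := by
  rw [((D.wq hw).2 v _ (D.apply_mem_span hw hu)).1, inv_apply_apply]

lemma root_mem_span {z : V} (hz : z ∈ D.roots) : z ∈ D.SpanPi := by
  obtain ⟨w, hw, a, ha, rfl⟩ := hz
  exact D.apply_mem_span hw (Submodule.subset_span ha)

lemma root_norm {z : V} (hz : z ∈ D.roots) : D.B z z = 1 := by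
  obtain ⟨w, hw, a, ha, rfl⟩ := hz
  rw [D.B_invariant hw a (Submodule.subset_span ha)]
  exact D.norm_one a ha

lemma root_symm {z t : V} (hz : z ∈ D.roots) (ht : t ∈ D.roots) :
    D.B z t = D.B t z :=
  D.symm_span z (D.root_mem_span hz) t (D.root_mem_span ht)

lemma reflUnit_conj {w : (Module.End ℝ V)ˣ} (hw : w ∈ D.Wgrp) {z : V}
    (hzS : z ∈ D.SpanPi) (hz : D.B z z = 1)
    (hwz : D.B ((w : Module.End ℝ V) z) ((w : Module.End ℝ V) z) = 1) :
    D.reflUnit hwz = w * D.reflUnit hz * w⁻¹ := by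
  refine Units.ext (LinearMap.ext fun v => ?_)
  have h1 : D.B (((w⁻¹ : (Module.End ℝ V)ˣ) : Module.End ℝ V) v) z
      = D.B v ((w : Module.End ℝ V) z) := ((D.wq hw).2 v z hzS).2
  simp only [Units.val_mul, Module.End.mul_apply, reflUnit_coe, refl_apply]
  rw [map_sub, map_smul, apply_inv_apply, h1]

lemma reflUnit_root_mem {z : V} (hz : z ∈ D.roots) :
    D.reflUnit (D.root_norm hz) ∈ D.Wgrp := by
  obtain ⟨w, hw, a, ha, rfl⟩ := hz
  have h := D.reflUnit_conj hw (Submodule.subset_span ha) (D.norm_one a ha)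
    (D.root_norm ⟨w, hw, a, ha, rfl⟩)
  rw [h]
  exact mul_mem (mul_mem hw (D.reflUnit_mem ha)) (inv_mem hw)

lemma roots_closed {w : (Module.End ℝ V)ˣ} (hw : w ∈ D.Wgrp) {z : V}
    (hz : z ∈ D.roots) : (w : Module.End ℝ V) z ∈ D.roots := by
  obtain ⟨w', hw', a, ha, rfl⟩ := hz
  exact ⟨w * w', mul_mem hw hw', a, ha, by simp [Units.val_mul, Module.End.mul_apply]⟩

lemma root_neg {z : V} (hz : z ∈ D.roots) : -z ∈ D.roots := by
  have h := D.roots_closed (D.reflUnit_root_mem hz) hz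
  rwa [D.reflUnit_self (D.root_norm hz)] at h

end CoxeterDatum

end Infra2
section Infra3

variable {V : Type*} [AddCommGroup V] [Module ℝ V]

namespace CoxeterDatum

variable (D : CoxeterDatum V)

/-- A word in the simple reflections. -/
def IsWord (l : List (Module.End ℝ V)ˣ) : Prop := ∀ u ∈ l, u ∈ D.simples

lemma isWord_nil : D.IsWord [] := by intro u hu; simp at hu

lemma word_prod_mem {l : List (Module.End ℝ V)ˣ} (hl : D.IsWord l) :
    l.prod ∈ D.Wgrp := by
  induction l with
  | nil => exact one_mem _
  | cons a l ih =>
    rw [List.prod_cons]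
    exact mul_mem (Subgroup.subset_closure (hl a (List.mem_cons_self)))
      (ih fun u hu => hl u (List.mem_cons_of_mem a hu))

lemma word_reverse_prod {l : List (Module.End ℝ V)ˣ} (hl : D.IsWord l) :
    l.reverse.prod = l.prod⁻¹ := by
  induction l with
  | nil => simp
  | cons a l ih =>
    rw [List.reverse_cons, List.prod_append, List.prod_cons, List.prod_nil, mul_one,
      List.prod_cons, mul_inv_rev, ih fun u hu => hl u (List.mem_cons_of_mem a hu),
      D.simple_inv (hl a (List.mem_cons_self))]

lemma exists_word {w : (Module.End ℝ V)ˣ} (hw : w ∈ D.Wgrp) :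
    ∃ l, D.IsWord l ∧ l.prod = w := by
  induction hw using Subgroup.closure_induction with
  | mem s hs => exact ⟨[s], fun u hu => (List.mem_singleton.1 hu) ▸ hs, by simp⟩
  | one => exact ⟨[], D.isWord_nil, by simp⟩
  | mul x y hx hy ihx ihy =>
    obtain ⟨l1, hl1, hp1⟩ := ihx
    obtain ⟨l2, hl2, hp2⟩ := ihy
    exact ⟨l1 ++ l2, fun u hu => (List.mem_append.1 hu).elim (hl1 u) (hl2 u),
      by rw [List.prod_append, hp1, hp2]⟩
  | inv x hx ihx =>
    obtain ⟨l, hl, hp⟩ := ihx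
    exact ⟨l.reverse, fun u hu => hl u (List.mem_reverse.1 hu),
      by rw [D.word_reverse_prod hl, hp]⟩

lemma len_le {l : List (Module.End ℝ V)ˣ} (hl : D.IsWord l)
    {w : (Module.End ℝ V)ˣ} (hp : l.prod = w) : D.len w ≤ l.length :=
  Nat.sInf_le ⟨l, rfl, hl, hp⟩

lemma len_spec {w : (Module.End ℝ V)ˣ} (hw : w ∈ D.Wgrp) :
    ∃ l, D.IsWord l ∧ l.prod = w ∧ l.length = D.len w := by
  obtain ⟨l, hl, hp⟩ := D.exists_word hw
  have hne : {n | ∃ l : List (Module.End ℝ V)ˣ,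
      l.length = n ∧ (∀ u ∈ l, u ∈ D.simples) ∧ l.prod = w}.Nonempty :=
    ⟨l.length, l, rfl, hl, hp⟩
  obtain ⟨l', hlen, hl', hp'⟩ := Nat.sInf_mem hne
  exact ⟨l', hl', hp', hlen⟩

lemma len_one : D.len 1 = 0 :=
  Nat.le_zero.1 (by simpa using D.len_le D.isWord_nil (l := []) (by simp))

lemma eq_one_of_len_zero {w : (Module.End ℝ V)ˣ} (hw : w ∈ D.Wgrp)
    (h : D.len w = 0) : w = 1 := by
  obtain ⟨l, hl, hp, hlen⟩ := D.len_spec hw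
  rw [h, List.length_eq_zero_iff] at hlen
  rw [← hp, hlen, List.prod_nil]

lemma len_mul_word_le {w : (Module.End ℝ V)ˣ} (hw : w ∈ D.Wgrp)
    {l : List (Module.End ℝ V)ˣ} (hl : D.IsWord l) :
    D.len (w * l.prod) ≤ D.len w + l.length := by
  obtain ⟨l0, hl0, hp0, hlen0⟩ := D.len_spec hw
  have : (l0 ++ l).prod = w * l.prod := by rw [List.prod_append, hp0]
  have h := D.len_le (fun u hu => (List.mem_append.1 hu).elim (hl0 u) (hl u)) this
  simpa [hlen0] using h

lemma len_mul_simple_le {w : (Module.End ℝ V)ˣ} (hw : w ∈ D.Wgrp)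
    {s : (Module.End ℝ V)ˣ} (hs : s ∈ D.simples) :
    D.len (w * s) ≤ D.len w + 1 := by
  have := D.len_mul_word_le hw (l := [s]) (fun u hu => by
    rw [List.mem_singleton] at hu; exact hu ▸ hs)
  simpa using this

lemma len_ge_mul_simple {w : (Module.End ℝ V)ˣ} (hw : w ∈ D.Wgrp)
    {s : (Module.End ℝ V)ˣ} (hs : s ∈ D.simples) :
    D.len w ≤ D.len (w * s) + 1 := by
  have h : w * s * s = w := by
    rw [mul_assoc, D.simple_sq hs, mul_one]
  have := D.len_mul_simple_le (mul_mem hw (Subgroup.subset_closure hs)) hs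
  rwa [h] at this

end CoxeterDatum

end Infra3
section Infra4

variable {V : Type*} [AddCommGroup V] [Module ℝ V]

/-- Chebyshev-like coefficient sequence. -/
noncomputable def cseq (c : ℝ) : ℕ → ℝ
  | 0 => 0
  | 1 => 1
  | (j+2) => -(2*c) * cseq c (j+1) - cseq c j

lemma cseq_zero (c : ℝ) : cseq c 0 = 0 := rfl
lemma cseq_one (c : ℝ) : cseq c 1 = 1 := rfl
lemma cseq_add_two (c : ℝ) (j : ℕ) :
    cseq c (j+2) = -(2*c) * cseq c (j+1) - cseq c j := rfl

lemma cseq_mono_of_le {c : ℝ} (hc : c ≤ -1) :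
    ∀ j, 0 ≤ cseq c j ∧ cseq c j ≤ cseq c (j+1) := by
  intro j
  induction j using Nat.twoStepInduction with
  | zero => simp [cseq_zero, cseq_one]
  | one =>
    refine ⟨by simp [cseq_one], ?_⟩
    rw [cseq_add_two, cseq_zero, cseq_one]
    nlinarith
  | more j ih1 ih2 =>
    obtain ⟨h1, h2⟩ := ih1
    obtain ⟨h3, h4⟩ := ih2
    have h5 : 0 ≤ cseq c (j+2) := le_trans h3 h4
    refine ⟨h5, ?_⟩
    rw [cseq_add_two c (j+1)]
    nlinarith

lemma cseq_sin {ω : ℝ} (hs : Real.sin ω ≠ 0) :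
    ∀ j : ℕ, cseq (-Real.cos ω) j = Real.sin (j*ω) / Real.sin ω := by
  intro j
  induction j using Nat.twoStepInduction with
  | zero => simp [cseq_zero]
  | one => simp [cseq_one, div_self hs]
  | more j ih1 ih2 =>
    rw [cseq_add_two, ih1, ih2]
    have e1 : ((j:ℝ)+2)*ω = ((j:ℝ)+1)*ω + ω := by ring
    have e2 : (j:ℝ)*ω = ((j:ℝ)+1)*ω - ω := by ring
    push_cast
    rw [e1, e2, Real.sin_add, Real.sin_sub]
    field_simp
    ring

namespace CoxeterDatum

variable (D : CoxeterDatum V) {a b : V}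

/-- The `k`-th letter of the alternating (b,a,b,a,...) word. -/
noncomputable def dletter (ha : a ∈ D.Pi) (hb : b ∈ D.Pi) (k : ℕ) : (Module.End ℝ V)ˣ :=
  if Even k then D.reflUnit (D.norm_one b hb) else D.reflUnit (D.norm_one a ha)

lemma dletter_simple (ha : a ∈ D.Pi) (hb : b ∈ D.Pi) (k : ℕ) :
    D.dletter ha hb k ∈ D.simples := by
  unfold dletter
  split_ifs
  · exact ⟨b, hb, rfl⟩
  · exact ⟨a, ha, rfl⟩

/-- Alternating words `... s_a s_b s_a s_b` (rightmost letter `s_b`). -/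
noncomputable def altWord (ha : a ∈ D.Pi) (hb : b ∈ D.Pi) : ℕ → (Module.End ℝ V)ˣ
  | 0 => 1
  | (k+1) => D.dletter ha hb k * altWord ha hb k

lemma altWord_zero (ha : a ∈ D.Pi) (hb : b ∈ D.Pi) : D.altWord ha hb 0 = 1 := rfl
lemma altWord_succ (ha : a ∈ D.Pi) (hb : b ∈ D.Pi) (k : ℕ) :
    D.altWord ha hb (k+1) = D.dletter ha hb k * D.altWord ha hb k := rfl

lemma altWord_mem (ha : a ∈ D.Pi) (hb : b ∈ D.Pi) (k : ℕ) :
    D.altWord ha hb k ∈ D.Wgrp := by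
  induction k with
  | zero => exact one_mem _
  | succ k ih =>
    rw [altWord_succ]
    exact mul_mem (Subgroup.subset_closure (D.dletter_simple ha hb k)) ih

lemma altWord_word (ha : a ∈ D.Pi) (hb : b ∈ D.Pi) (k : ℕ) :
    ∃ l, D.IsWord l ∧ l.length = k ∧ D.altWord ha hb k = l.prod := by
  induction k with
  | zero => exact ⟨[], D.isWord_nil, rfl, by simp [altWord_zero]⟩
  | succ k ih =>
    obtain ⟨l, hl, hlen, hp⟩ := ih
    refine ⟨D.dletter ha hb k :: l, ?_, by simp [hlen], ?_⟩
    · intro u hu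
      rcases List.mem_cons.1 hu with h | h
      · exact h ▸ D.dletter_simple ha hb k
      · exact hl u h
    · rw [List.prod_cons, altWord_succ, hp]

lemma altWord_apply_a (ha : a ∈ D.Pi) (hb : b ∈ D.Pi) (k : ℕ) :
    ((D.altWord ha hb k : (Module.End ℝ V)ˣ) : Module.End ℝ V) a =
      (if Even k then cseq (D.B a b) (k+1) else cseq (D.B a b) k) • a +
      (if Even k then cseq (D.B a b) k else cseq (D.B a b) (k+1)) • b := by
  have hba : D.B b a = D.B a b := D.symm b hb a ha
  induction k with
  | zero => simp [altWord_zero, cseq_zero, cseq_one]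
  | succ k ih =>
    rw [altWord_succ, Units.val_mul, Module.End.mul_apply, ih]
    unfold dletter
    by_cases hk : Even k
    · have hk1 : ¬ Even (k+1) := by simpa [Nat.even_add_one] using hk
      simp only [hk, hk1, if_true, if_false, reflUnit_coe, map_add, map_smul, refl_apply,
        LinearMap.add_apply, LinearMap.smul_apply, smul_eq_mul, hba, D.norm_one b hb]
      rw [cseq_add_two]
      module
    · have hk1 : Even (k+1) := Nat.even_add_one.2 hk
      simp only [hk, hk1, if_true, if_false, reflUnit_coe, map_add, map_smul, refl_apply,
        LinearMap.add_apply, LinearMap.smul_apply, smul_eq_mul, hba, D.norm_one a ha]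
      rw [cseq_add_two]
      module

lemma altWord_fix (ha : a ∈ D.Pi) (hb : b ∈ D.Pi) {v : V}
    (hva : D.B v a = 0) (hvb : D.B v b = 0) (k : ℕ) :
    ((D.altWord ha hb k : (Module.End ℝ V)ˣ) : Module.End ℝ V) v = v := by
  induction k with
  | zero => rfl
  | succ k ih =>
    rw [altWord_succ, Units.val_mul, Module.End.mul_apply, ih]
    unfold dletter
    split_ifs
    · rw [reflUnit_coe, refl_apply, hvb]; simp
    · rw [reflUnit_coe, refl_apply, hva]; simp

end CoxeterDatum

end Infra4
section Infra4b

variable {V : Type*} [AddCommGroup V] [Module ℝ V]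

namespace CoxeterDatum

variable (D : CoxeterDatum V) {a b : V}

lemma altWord_even_pow (ha : a ∈ D.Pi) (hb : b ∈ D.Pi) (m : ℕ) :
    D.altWord ha hb (2*m) =
      (D.reflUnit (D.norm_one a ha) * D.reflUnit (D.norm_one b hb))^m := by
  induction m with
  | zero => simp [altWord_zero]
  | succ m ih =>
    have h2 : 2*(m+1) = (2*m+1)+1 := by ring
    have h1 : ¬ Even (2*m+1) := by rw [Nat.even_iff]; omega
    have h0 : Even (2*m) := by rw [Nat.even_iff]; omega
    rw [h2, altWord_succ, altWord_succ, ih]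
    unfold dletter
    rw [if_neg h1, if_pos h0, pow_succ', ← mul_assoc]

lemma altWord_swap_inv (ha : a ∈ D.Pi) (hb : b ∈ D.Pi) (m : ℕ) :
    D.altWord hb ha (2*m) = (D.altWord ha hb (2*m))⁻¹ := by
  have h : D.reflUnit (D.norm_one b hb) * D.reflUnit (D.norm_one a ha)
      = (D.reflUnit (D.norm_one a ha) * D.reflUnit (D.norm_one b hb))⁻¹ := by
    rw [mul_inv_rev, D.simple_inv ⟨a, ha, D.reflUnit_coe (D.norm_one a ha)⟩, D.simple_inv ⟨b, hb, D.reflUnit_coe (D.norm_one b hb)⟩]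
  rw [altWord_even_pow, altWord_even_pow, h, inv_pow]

lemma altWord_braid (ha : a ∈ D.Pi) (hb : b ∈ D.Pi) {m : ℕ} (hm : 2 ≤ m)
    (hc : D.B a b = -Real.cos (Real.pi/m)) : D.altWord ha hb (2*m) = 1 := by
  have hm0 : (m:ℝ) ≠ 0 := by positivity
  have hmpos : (0:ℝ) < m := by positivity
  set ω := Real.pi/m with hω
  have hωpos : 0 < ω := by positivity
  have hm2 : (2:ℝ) ≤ (m:ℝ) := by exact_mod_cast hm
  have hωlt : ω < Real.pi := by
    rw [hω, div_lt_iff₀ hmpos]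
    nlinarith [Real.pi_pos]
  have hsin : 0 < Real.sin ω := Real.sin_pos_of_pos_of_lt_pi hωpos hωlt
  have hsin' : Real.sin ω ≠ 0 := ne_of_gt hsin
  have hba : D.B b a = D.B a b := D.symm b hb a ha
  have h2m : Even (2*m) := by rw [Nat.even_iff]; omega
  -- coefficient values
  have key1 : cseq (D.B a b) (2*m) = 0 := by
    rw [hc, cseq_sin hsin']
    have : ((2*m : ℕ):ℝ) * ω = 2 * Real.pi := by
      push_cast; rw [hω]; field_simp
    rw [this, Real.sin_two_pi, zero_div]
  have key2 : cseq (D.B a b) (2*m+1) = 1 := by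
    rw [hc, cseq_sin hsin']
    have : ((2*m+1 : ℕ):ℝ) * ω = ω + 2 * Real.pi := by
      push_cast; rw [hω]; field_simp; ring
    rw [this, Real.sin_add_two_pi, div_self hsin']
  -- g fixes a
  have ga : ((D.altWord ha hb (2*m) : (Module.End ℝ V)ˣ) : Module.End ℝ V) a = a := by
    rw [D.altWord_apply_a ha hb (2*m), if_pos h2m, if_pos h2m, key1, key2]
    simp
  -- g fixes b
  have gb' : ((D.altWord hb ha (2*m) : (Module.End ℝ V)ˣ) : Module.End ℝ V) b = b := by
    have key1' : cseq (D.B b a) (2*m) = 0 := by rw [hba]; exact key1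
    have key2' : cseq (D.B b a) (2*m+1) = 1 := by rw [hba]; exact key2
    rw [D.altWord_apply_a hb ha (2*m), if_pos h2m, if_pos h2m, key1', key2']
    simp
  have gb : ((D.altWord ha hb (2*m) : (Module.End ℝ V)ˣ) : Module.End ℝ V) b = b := by
    rw [D.altWord_swap_inv ha hb] at gb'
    calc ((D.altWord ha hb (2*m) : (Module.End ℝ V)ˣ) : Module.End ℝ V) b
        = ((D.altWord ha hb (2*m) : (Module.End ℝ V)ˣ) : Module.End ℝ V)
          ((((D.altWord ha hb (2*m))⁻¹ : (Module.End ℝ V)ˣ) : Module.End ℝ V) b) := by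
          rw [gb']
      _ = b := apply_inv_apply _ b
  -- |c| < 1
  have hc2 : (D.B a b)^2 < 1 := by
    rw [hc]
    have := Real.sin_sq_add_cos_sq ω
    nlinarith
  set c := D.B a b with hcdef
  have hden : (0:ℝ) < 1 - c^2 := by linarith
  have hden' : 1 - c^2 ≠ 0 := ne_of_gt hden
  refine Units.ext (LinearMap.ext fun v => ?_)
  set lv := (D.B v a - c * D.B v b)/(1 - c^2) with hlv
  set mv := (D.B v b - c * D.B v a)/(1 - c^2) with hmv
  have hva : D.B (v - lv • a - mv • b) a = 0 := by
    simp only [map_sub, map_smul, LinearMap.sub_apply, LinearMap.smul_apply, smul_eq_mul,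
      D.norm_one a ha, hba, ← hcdef, hlv, hmv]
    field_simp
    ring
  have hvb : D.B (v - lv • a - mv • b) b = 0 := by
    simp only [map_sub, map_smul, LinearMap.sub_apply, LinearMap.smul_apply, smul_eq_mul,
      D.norm_one b hb, ← hcdef, hlv, hmv]
    field_simp
    ring
  have hfix := D.altWord_fix ha hb hva hvb (2*m)
  have hdecomp : v = (v - lv • a - mv • b) + lv • a + mv • b := by abel
  rw [Units.val_one, Module.End.one_apply]
  conv_lhs => rw [hdecomp]
  rw [map_add, map_add, map_smul, map_smul, ga, gb, hfix]
  abel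

lemma altWord_step_down (ha : a ∈ D.Pi) (hb : b ∈ D.Pi) (k : ℕ) :
    D.altWord ha hb k = D.dletter ha hb k * D.altWord ha hb (k+1) := by
  rw [altWord_succ, ← mul_assoc, D.simple_sq (D.dletter_simple ha hb k), one_mul]

lemma altWord_shorten (ha : a ∈ D.Pi) (hb : b ∈ D.Pi) {m : ℕ}
    (hbraid : D.altWord ha hb (2*m) = 1) (hm : 1 ≤ m) :
    ∀ d k, k + d = 2*m - 1 →
    ∃ l, D.IsWord l ∧ l.length = d ∧
      D.altWord ha hb k * D.reflUnit (D.norm_one a ha) = l.prod := by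
  intro d
  induction d with
  | zero =>
    intro k hk
    have hodd : ¬ Even k := by rw [Nat.even_iff]; omega
    have hk1 : k + 1 = 2*m := by omega
    have h1 : D.dletter ha hb k * D.altWord ha hb k = 1 := by
      rw [← altWord_succ, hk1, hbraid]
    have h2 : D.altWord ha hb k = D.reflUnit (D.norm_one a ha) := by
      have := D.altWord_step_down ha hb k
      rw [hk1, hbraid, mul_one] at this
      rw [this]
      unfold dletter
      rw [if_neg hodd]
    refine ⟨[], D.isWord_nil, rfl, ?_⟩
    rw [h2, List.prod_nil]
    exact D.simple_sq ⟨a, ha, rfl⟩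
  | succ d ih =>
    intro k hk
    obtain ⟨l, hl, hlen, hp⟩ := ih (k+1) (by omega)
    refine ⟨D.dletter ha hb k :: l, ?_, by simp [hlen], ?_⟩
    · intro u hu
      rcases List.mem_cons.1 hu with h | h
      · exact h ▸ D.dletter_simple ha hb k
      · exact hl u h
    · rw [List.prod_cons, ← hp, D.altWord_step_down ha hb k, mul_assoc]

end CoxeterDatum

end Infra4b
section Infra5

variable {V : Type*} [AddCommGroup V] [Module ℝ V]

lemma cseq_nonneg_cos {m : ℕ} (hm : 2 ≤ m) (j : ℕ) (hj : j ≤ m) :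
    0 ≤ cseq (-Real.cos (Real.pi/m)) j := by
  have hmpos : (0:ℝ) < m := by positivity
  have hωpos : 0 < Real.pi/m := by positivity
  have hωlt : Real.pi/m < Real.pi := by
    rw [div_lt_iff₀ hmpos]
    have : (2:ℝ) ≤ (m:ℝ) := by exact_mod_cast hm
    nlinarith [Real.pi_pos]
  have hsin : 0 < Real.sin (Real.pi/m) := Real.sin_pos_of_pos_of_lt_pi hωpos hωlt
  rw [cseq_sin (ne_of_gt hsin)]
  apply div_nonneg _ hsin.le
  apply Real.sin_nonneg_of_nonneg_of_le_pi
  · positivity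
  · have hj' : (j:ℝ) ≤ (m:ℝ) := by exact_mod_cast hj
    calc (j:ℝ) * (Real.pi/m) ≤ (m:ℝ) * (Real.pi/m) := by
          apply mul_le_mul_of_nonneg_right hj' hωpos.le
      _ = Real.pi := by field_simp

namespace CoxeterDatum

variable (D : CoxeterDatum V) {a b : V}

lemma altWord_apply_nonneg (ha : a ∈ D.Pi) (hb : b ∈ D.Pi) (k : ℕ)
    (hnn : ∀ j ≤ k+1, 0 ≤ cseq (D.B a b) j) :
    ∃ p q : ℝ, 0 ≤ p ∧ 0 ≤ q ∧
      ((D.altWord ha hb k : (Module.End ℝ V)ˣ) : Module.End ℝ V) a = p • a + q • b := by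
  by_cases hk : Even k
  · exact ⟨cseq (D.B a b) (k+1), cseq (D.B a b) k, hnn _ le_rfl, hnn _ (by omega),
      by rw [D.altWord_apply_a ha hb k, if_pos hk, if_pos hk]⟩
  · exact ⟨cseq (D.B a b) k, cseq (D.B a b) (k+1), hnn _ (by omega), hnn _ le_rfl,
      by rw [D.altWord_apply_a ha hb k, if_neg hk, if_neg hk]⟩

theorem tits_aux : ∀ n : ℕ, ∀ w ∈ D.Wgrp, D.len w = n → ∀ a, ∀ ha : a ∈ D.Pi,
    D.len w ≤ D.len (w * D.reflUnit (D.norm_one a ha)) →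
    (w : Module.End ℝ V) a ∈ PLC D.Pi := by
  intro n
  induction n using Nat.strong_induction_on with
  | _ n IH =>
    intro w hw hlen a ha hge
    rcases Nat.eq_zero_or_pos n with hn0 | hnpos
    · have hw1 : w = 1 := D.eq_one_of_len_zero hw (hlen.trans hn0)
      rw [hw1, Units.val_one, Module.End.one_apply]
      exact PLC.mem_of_mem ha
    · classical
      -- extract the last letter of a reduced word
      obtain ⟨l, hword, hprod, hlength⟩ := D.len_spec hw
      rcases List.eq_nil_or_concat l with rfl | ⟨l', t, rfl⟩
      · simp only [List.length_nil] at hlength; omega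
      have ht : t ∈ D.simples := hword t (by simp)
      obtain ⟨b, hb, rfl⟩ := D.simple_coe ht
      set sa := D.reflUnit (D.norm_one a ha) with hsa
      set sb := D.reflUnit (D.norm_one b hb) with hsb
      have hsb_simple : sb ∈ D.simples := ⟨b, hb, rfl⟩
      have hsa_simple : sa ∈ D.simples := ⟨a, ha, rfl⟩
      have hword' : D.IsWord l' := fun u hu => hword u (by simp [List.concat_eq_append]; exact Or.inl hu)
      have hwsb : w * sb = l'.prod := by
        have h1 : l'.prod * sb = w := by
          rw [← hprod, List.prod_concat]
        rw [← h1, mul_assoc, D.simple_sq hsb_simple, mul_one]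
      have hlt : D.len (w * sb) < D.len w := by
        have h2 := D.len_le hword' hwsb.symm
        have h3 : l'.length + 1 = n := by
          have h4 := hlength
          rw [List.length_concat] at h4
          omega
        omega
      have hab : a ≠ b := by
        rintro rfl
        have : sa = sb := by rw [hsa, hsb]
        rw [← this] at hlt
        omega
      -- the chained condition
      set P : ℕ → Prop := fun k => D.len (w * (D.altWord ha hb k)⁻¹) + k = D.len w with hP
      set Q : ℕ → Prop := fun k => ∀ i ≤ k, P i with hQdef
      have hstep : ∀ k, w * (D.altWord ha hb (k+1))⁻¹
          = (w * (D.altWord ha hb k)⁻¹) * D.dletter ha hb k := by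
        intro k
        rw [altWord_succ, mul_inv_rev, D.simple_inv (D.dletter_simple ha hb k), ← mul_assoc]
      have hP0 : P 0 := by
        simp only [hP, altWord_zero, inv_one, mul_one, add_zero]
      have hP1 : P 1 := by
        have h1 : D.altWord ha hb 1 = sb := by
          rw [altWord_succ, altWord_zero, mul_one]
          unfold dletter
          rw [if_pos (Even.zero)]
        have h2 := D.len_ge_mul_simple hw hsb_simple
        simp only [hP, h1, D.simple_inv hsb_simple]
        omega
      have hQ1 : Q 1 := by
        intro i hi
        interval_cases i
        exacts [hP0, hP1]
      have hPbound : ∀ k, P k → k ≤ D.len w := fun k hk => by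
        simp only [hP] at hk; omega
      have hlen1 : 1 ≤ D.len w := by omega
      set k₀ := Nat.findGreatest Q (D.len w) with hk₀
      have hQk : Q k₀ := Nat.findGreatest_spec hlen1 hQ1
      have hk1 : 1 ≤ k₀ := Nat.le_findGreatest hlen1 hQ1
      have hnP : ¬ P (k₀ + 1) := by
        intro hPk1
        have hb1 : k₀ + 1 ≤ D.len w := hPbound _ hPk1
        have hQk1 : Q (k₀ + 1) := by
          intro i hi
          rcases Nat.lt_or_ge i (k₀+1) with h | h
          · exact hQk i (by omega)
          · have : i = k₀ + 1 := by omega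
            exact this ▸ hPk1
        exact Nat.findGreatest_is_greatest (by omega) hb1 hQk1
      obtain ⟨k₁, hk₁⟩ : ∃ k₁, k₀ = k₁ + 1 := ⟨k₀ - 1, by omega⟩
      set v := w * (D.altWord ha hb k₀)⁻¹ with hv
      have hvmem : v ∈ D.Wgrp := mul_mem hw (inv_mem (D.altWord_mem ha hb k₀))
      have hPk : P k₀ := hQk k₀ le_rfl
      have hlenv : D.len v + k₀ = D.len w := hPk
      have hPk1' : P k₁ := hQk k₁ (by omega)
      -- length goes up with both letters
      have hcond1 : D.len v ≤ D.len (v * D.dletter ha hb k₁) := by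
        have h1 : v * D.dletter ha hb k₁ = w * (D.altWord ha hb k₁)⁻¹ := by
          rw [hv, hk₁, hstep k₁, mul_assoc, D.simple_sq (D.dletter_simple ha hb k₁), mul_one]
        rw [h1]
        simp only [hP] at hPk1'
        omega
      have hcond2 : D.len v ≤ D.len (v * D.dletter ha hb (k₁+1)) := by
        have h1 : v * D.dletter ha hb (k₁+1) = w * (D.altWord ha hb (k₀+1))⁻¹ := by
          rw [hstep k₀, hv, hk₁]
        have h2 := D.len_ge_mul_simple hvmem (D.dletter_simple ha hb (k₁+1))
        rw [h1] at h2 ⊢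
        simp only [hP] at hnP
        omega
      have hvsa : D.len v ≤ D.len (v * sa) ∧ D.len v ≤ D.len (v * sb) := by
        by_cases hpar : Even k₁
        · have e1 : D.dletter ha hb k₁ = sb := by unfold dletter; rw [if_pos hpar]
          have e2 : D.dletter ha hb (k₁+1) = sa := by
            unfold dletter
            rw [if_neg (by simpa [Nat.even_add_one] using hpar)]
          rw [e1] at hcond1; rw [e2] at hcond2
          exact ⟨hcond2, hcond1⟩
        · have e1 : D.dletter ha hb k₁ = sa := by unfold dletter; rw [if_neg hpar]
          have e2 : D.dletter ha hb (k₁+1) = sb := by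
            unfold dletter
            rw [if_pos (Nat.even_add_one.2 hpar)]
          rw [e1] at hcond1; rw [e2] at hcond2
          exact ⟨hcond1, hcond2⟩
      have hvlt : D.len v < n := by omega
      have hva : (v : Module.End ℝ V) a ∈ PLC D.Pi :=
        IH (D.len v) hvlt v hvmem rfl a ha hvsa.1
      have hvb : (v : Module.End ℝ V) b ∈ PLC D.Pi :=
        IH (D.len v) hvlt v hvmem rfl b hb hvsa.2
      have hweq : w = v * D.altWord ha hb k₀ := by
        rw [hv, inv_mul_cancel_right]
      -- final assembly given nonneg coefficients
      have hfinal : (∀ j ≤ k₀+1, 0 ≤ cseq (D.B a b) j) →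
          (w : Module.End ℝ V) a ∈ PLC D.Pi := by
        intro hnn
        obtain ⟨p, q, hp, hq, hcoef⟩ := D.altWord_apply_nonneg ha hb k₀ hnn
        have hwa : (w : Module.End ℝ V) a
            = p • ((v : Module.End ℝ V) a) + q • ((v : Module.End ℝ V) b) := by
          rw [hweq, Units.val_mul, Module.End.mul_apply, hcoef, map_add, map_smul, map_smul]
        rw [hwa]
        refine PLC.combo hva hvb hp hq ?_
        rintro ⟨rfl, rfl⟩
        have h0 : ((D.altWord ha hb k₀ : (Module.End ℝ V)ˣ) : Module.End ℝ V) a = 0 := by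
          rw [hcoef]; simp
        have ha0 : a = (0:V) := by
          have := congrArg (((D.altWord ha hb k₀)⁻¹ : (Module.End ℝ V)ˣ) :
            Module.End ℝ V) h0
          rwa [inv_apply_apply, map_zero] at this
        exact absurd (PLC.mem_of_mem ha) (ha0 ▸ D.zero_not_plc)
      rcases D.offdiag a ha b hb hab with ⟨m₀, hm₀, hcval⟩ | hcle
      · -- finite dihedral entry
        rcases le_or_gt (k₀+1) m₀ with hkm | hkm
        · exact hfinal fun j hj => by
            rw [hcval]; exact cseq_nonneg_cos hm₀ j (by omega)
        · -- braid relation gives a contradiction with hge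
          exfalso
          have hbraid := D.altWord_braid ha hb hm₀ hcval
          have hk2m : k₀ ≤ 2*m₀ - 1 := by
            by_contra hcon
            have hP2m : P (2*m₀) := hQk (2*m₀) (by omega)
            simp only [hP, hbraid, inv_one, mul_one] at hP2m
            omega
          obtain ⟨l₂, hl₂, hlen₂, hprod₂⟩ :=
            D.altWord_shorten ha hb hbraid (by omega) (2*m₀ - 1 - k₀) k₀ (by omega)
          have hwsa : w * sa = v * l₂.prod := by
            rw [hweq, mul_assoc, ← hprod₂, hsa]
          have hlen3 : D.len (w * sa) ≤ D.len v + (2*m₀ - 1 - k₀) := by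
            rw [hwsa, ← hlen₂]
            exact D.len_mul_word_le hvmem hl₂
          omega
      · exact hfinal fun j _ => (cseq_mono_of_le hcle j).1

theorem simple_pos_or_neg {w : (Module.End ℝ V)ˣ} (hw : w ∈ D.Wgrp) {a : V}
    (ha : a ∈ D.Pi) :
    (w : Module.End ℝ V) a ∈ PLC D.Pi ∨ -((w : Module.End ℝ V) a) ∈ PLC D.Pi := by
  set sa := D.reflUnit (D.norm_one a ha) with hsa
  have hsamem : sa ∈ D.Wgrp := D.reflUnit_mem ha
  rcases le_or_gt (D.len w) (D.len (w * sa)) with h | h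
  · exact Or.inl (D.tits_aux (D.len w) w hw rfl a ha h)
  · right
    set w' := w * sa with hw'
    have hw'mem : w' ∈ D.Wgrp := mul_mem hw hsamem
    have hww' : w' * sa = w := by
      rw [hw', mul_assoc, D.simple_sq ⟨a, ha, rfl⟩, mul_one]
    have hge' : D.len w' ≤ D.len (w' * sa) := by rw [hww']; omega
    have hpos := D.tits_aux (D.len w') w' hw'mem rfl a ha hge'
    have : (w' : Module.End ℝ V) a = -((w : Module.End ℝ V) a) := by
      rw [hw', Units.val_mul, Module.End.mul_apply, hsa, reflUnit_coe, refl_apply,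
        D.norm_one a ha]
      rw [show a - (2*1:ℝ) • a = -a by module, map_neg]
    rwa [this] at hpos

theorem root_pos_or_neg {z : V} (hz : z ∈ D.roots) :
    z ∈ D.posRoots ∨ z ∈ D.negRoots := by
  obtain ⟨w, hw, a, ha, rfl⟩ := hz
  rcases D.simple_pos_or_neg hw ha with h | h
  · exact Or.inl ⟨⟨w, hw, a, ha, rfl⟩, h⟩
  · exact Or.inr ⟨D.root_neg ⟨w, hw, a, ha, rfl⟩, h⟩

lemma neg_of_root_not_pos {z : V} (hz : z ∈ D.roots) (h : z ∉ D.posRoots) :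
    z ∈ D.negRoots := (D.root_pos_or_neg hz).resolve_left h

lemma pos_of_root_not_neg {z : V} (hz : z ∈ D.roots) (h : z ∉ D.negRoots) :
    z ∈ D.posRoots := (D.root_pos_or_neg hz).resolve_right h

end CoxeterDatum

end Infra5
section Infra6

variable {V : Type*} [AddCommGroup V] [Module ℝ V]

/-- The sequence of vectors at angles `j·θ` in the plane spanned by `u, v`. -/
noncomputable def dseq (θ : ℝ) (u v : V) (j : ℤ) : V :=
  (Real.sin ((1 - (j:ℝ)) * θ) / Real.sin θ) • u + (Real.sin ((j:ℝ) * θ) / Real.sin θ) • v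

namespace CoxeterDatum

variable (D : CoxeterDatum V) {u v : V} {θ : ℝ}

lemma dseq_zero (hsin : Real.sin θ ≠ 0) : dseq θ u v 0 = u := by
  unfold dseq
  norm_num [div_self hsin]

lemma dseq_one (hsin : Real.sin θ ≠ 0) : dseq θ u v 1 = v := by
  unfold dseq
  norm_num [div_self hsin]

lemma B_dseq_u (huu : D.B u u = 1) (hvu : D.B v u = Real.cos θ)
    (hsin : Real.sin θ ≠ 0) (j : ℤ) :
    D.B (dseq θ u v j) u = Real.cos ((j:ℝ)*θ) := by
  simp only [dseq, map_add, map_smul, LinearMap.add_apply, LinearMap.smul_apply,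
    smul_eq_mul, huu, hvu]
  rw [show (1 - (j:ℝ)) * θ = θ - (j:ℝ)*θ by ring, Real.sin_sub]
  field_simp
  ring

lemma B_dseq_v (hvv : D.B v v = 1) (huv : D.B u v = Real.cos θ)
    (hsin : Real.sin θ ≠ 0) (j : ℤ) :
    D.B (dseq θ u v j) v = Real.cos ((1-(j:ℝ))*θ) := by
  simp only [dseq, map_add, map_smul, LinearMap.add_apply, LinearMap.smul_apply,
    smul_eq_mul, hvv, huv]
  rw [show (1 - (j:ℝ)) * θ = θ - (j:ℝ)*θ from by ring, Real.sin_sub, Real.cos_sub]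
  field_simp
  linear_combination (-Real.sin ((j:ℝ)*θ)) * Real.sin_sq_add_cos_sq θ

lemma refl_u_dseq (huu : D.B u u = 1) (hvu : D.B v u = Real.cos θ)
    (hsin : Real.sin θ ≠ 0) (j : ℤ) :
    D.refl u (dseq θ u v j) = -(dseq θ u v (-j)) := by
  rw [refl_apply, D.B_dseq_u huu hvu hsin j]
  unfold dseq
  push_cast
  match_scalars
  · rw [show (1 - (j:ℝ)) * θ = θ - (j:ℝ)*θ from by ring,
      show (1 - -(j:ℝ)) * θ = (j:ℝ)*θ + θ from by ring, Real.sin_sub, Real.sin_add]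
    field_simp
    ring
  · rw [show -(j:ℝ) * θ = -((j:ℝ)*θ) from by ring, Real.sin_neg]
    ring

lemma refl_v_dseq (hvv : D.B v v = 1) (huv : D.B u v = Real.cos θ)
    (hsin : Real.sin θ ≠ 0) (j : ℤ) :
    D.refl v (dseq θ u v j) = -(dseq θ u v (2-j)) := by
  rw [refl_apply, D.B_dseq_v hvv huv hsin j]
  unfold dseq
  push_cast
  match_scalars
  · rw [show (1 - (2 - (j:ℝ))) * θ = -((1 - (j:ℝ))*θ) from by ring, Real.sin_neg]
    ring
  · rw [show (2 - (j:ℝ)) * θ = θ + (θ - (j:ℝ)*θ) from by ring,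
      show (1 - (j:ℝ)) * θ = θ - (j:ℝ)*θ from by ring,
      Real.sin_add, Real.sin_sub, Real.cos_sub]
    field_simp
    linear_combination (-Real.sin ((j:ℝ)*θ)) * Real.sin_sq_add_cos_sq θ

end CoxeterDatum

end Infra6
section Infra7

variable {V : Type*} [AddCommGroup V] [Module ℝ V]

namespace CoxeterDatum

variable (D : CoxeterDatum V)

lemma neg_mem_negRoots {z : V} (hz : z ∈ D.posRoots) : -z ∈ D.negRoots := by
  show -(-z) ∈ D.posRoots
  rwa [neg_neg]

lemma not_dom_of_B_nonpos {u v : V} (hu : u ∈ D.posRoots) (hv : v ∈ D.posRoots)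
    (hB : D.B u v ≤ 0) : ¬ D.dom u v := by
  intro hdom
  set r := D.reflUnit (D.root_norm hu.1) with hr
  have hrmem : r ∈ D.Wgrp := D.reflUnit_root_mem hu.1
  have h1 : (r : Module.End ℝ V) u = -u := D.reflUnit_self (D.root_norm hu.1)
  have h2 : (r : Module.End ℝ V) u ∈ D.negRoots := by
    rw [h1]; exact D.neg_mem_negRoots hu
  have h3 := hdom r hrmem h2
  have h4 : (r : Module.End ℝ V) v = (1:ℝ) • v + (-(2 * D.B v u)) • u := by
    rw [hr, reflUnit_coe, refl_apply]; module
  have hvu : D.B v u ≤ 0 := by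
    rw [D.root_symm hv.1 hu.1]; exact hB
  have h5 : (r : Module.End ℝ V) v ∈ D.posRoots := by
    refine ⟨D.roots_closed hrmem hv.1, ?_⟩
    rw [h4]
    exact PLC.combo hv.2 hu.2 one_pos.le (by linarith) (fun h => one_ne_zero h.1)
  exact D.pos_neg_disjoint h5 h3

theorem B_ge_one_of_dom {u v : V} (hu : u ∈ D.posRoots) (hv : v ∈ D.posRoots)
    (hdom : D.dom u v) : 1 ≤ D.B u v := by
  by_contra hlt
  push_neg at hlt
  have hc0 : 0 < D.B u v := by
    by_contra hle
    push_neg at hle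
    exact D.not_dom_of_B_nonpos hu hv hle hdom
  set c := D.B u v with hcdef
  set θ := Real.arccos c with hθ
  have hcos : Real.cos θ = c := Real.cos_arccos (by linarith) (by linarith)
  have hsin2 : Real.sin θ = Real.sqrt (1 - c^2) := by rw [hθ, Real.sin_arccos]
  have hsinpos : 0 < Real.sin θ := by
    rw [hsin2]
    apply Real.sqrt_pos.2
    nlinarith
  have hsin : Real.sin θ ≠ 0 := ne_of_gt hsinpos
  have hθpos : 0 < θ := by rw [hθ]; exact Real.arccos_pos.2 hlt
  have hθlepi : θ ≤ Real.pi := by rw [hθ]; exact Real.arccos_le_pi c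
  have hθlt : θ < Real.pi / 2 := by
    by_contra hge
    push_neg at hge
    have hcle : Real.cos θ ≤ 0 :=
      Real.cos_nonpos_of_pi_div_two_le_of_le hge (by linarith [Real.pi_pos])
    rw [hcos] at hcle
    linarith
  have huu : D.B u u = 1 := D.root_norm hu.1
  have hvv : D.B v v = 1 := D.root_norm hv.1
  have huv : D.B u v = Real.cos θ := by rw [hcos]
  have hvu : D.B v u = Real.cos θ := by rw [D.root_symm hv.1 hu.1, hcos]
  set X : ℤ → V := fun j => dseq θ u v j with hX
  set ru := D.reflUnit huu with hru
  set rv := D.reflUnit hvv with hrv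
  have hrumem : ru ∈ D.Wgrp := D.reflUnit_root_mem hu.1
  have hrvmem : rv ∈ D.Wgrp := D.reflUnit_root_mem hv.1
  have hruX : ∀ j : ℤ, (ru : Module.End ℝ V) (X j) = -(X (-j)) := fun j =>
    D.refl_u_dseq huu hvu hsin j
  have hrvX : ∀ j : ℤ, (rv : Module.End ℝ V) (X j) = -(X (2-j)) := fun j =>
    D.refl_v_dseq hvv huv hsin j
  have hruu : (ru : Module.End ℝ V) u = -u := D.reflUnit_self huu
  set ρ := ru * rv with hρ
  have hρmem : ρ ∈ D.Wgrp := mul_mem hrumem hrvmem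
  have hρX : ∀ j : ℤ, (ρ : Module.End ℝ V) (X j) = X (j - 2) := by
    intro j
    rw [hρ, Units.val_mul, Module.End.mul_apply, hrvX j, map_neg, hruX (2-j), neg_neg]
    congr 1
    ring
  have hρpowX : ∀ (k : ℕ) (j : ℤ),
      ((ρ^k : (Module.End ℝ V)ˣ) : Module.End ℝ V) (X j) = X (j - 2*k) := by
    intro k
    induction k with
    | zero => intro j; norm_num
    | succ k ih =>
      intro j
      rw [pow_succ, Units.val_mul, Module.End.mul_apply, hρX j, ih (j-2)]
      congr 1
      push_cast
      ring
  have hX0 : X 0 = u := dseq_zero hsin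
  have hX1 : X 1 = v := dseq_one hsin
  have hXe : ∀ k : ℕ, ((ρ^k : (Module.End ℝ V)ˣ) : Module.End ℝ V) u = X (-(2*(k:ℤ))) := by
    intro k
    rw [← hX0, hρpowX k 0]
    congr 1
    ring
  have hXo : ∀ k : ℕ, ((ρ^k : (Module.End ℝ V)ˣ) : Module.End ℝ V) v = X (1-2*(k:ℤ)) := by
    intro k
    rw [← hX1, hρpowX k 1]
  have hchain : ∀ d : ℕ, X (1 - (d:ℤ)) ∈ D.posRoots := by
    intro d
    induction d with
    | zero => simpa using (hX1 ▸ hv)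
    | succ d ih =>
      rcases Nat.even_or_odd d with ⟨k, hk⟩ | ⟨k, hk⟩
      · -- d = k + k; goal: X (-(d)) = X (-(2k)) positive
        have hkd : (1 : ℤ) - ((d+1 : ℕ) : ℤ) = -(2*(k:ℤ)) := by
          have : (d:ℤ) = 2*(k:ℤ) := by exact_mod_cast congrArg (Nat.cast : ℕ → ℤ) (hk.trans (two_mul k).symm)
          omega
        rw [hkd]
        by_contra hnot
        have hXroot : X (-(2*(k:ℤ))) ∈ D.roots := by
          rw [← hXe k]
          exact D.roots_closed (pow_mem hρmem k) hu.1
        have hneg : X (-(2*(k:ℤ))) ∈ D.negRoots := D.neg_of_root_not_pos hXroot hnot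
        have hdomr := hdom (ρ^k) (pow_mem hρmem k) (by rw [hXe k]; exact hneg)
        rw [hXo k] at hdomr
        have hih : X (1-2*(k:ℤ)) ∈ D.posRoots := by
          have : (1 : ℤ) - ((d : ℕ) : ℤ) = 1-2*(k:ℤ) := by
            have : (d:ℤ) = 2*(k:ℤ) := by exact_mod_cast congrArg (Nat.cast : ℕ → ℤ) (hk.trans (two_mul k).symm)
            omega
          rwa [this] at ih
        exact D.pos_neg_disjoint hih hdomr
      · -- d = 2k+1; ih at X(-(2k)), goal X(-(2k)-1)
        have hd : (d:ℤ) = 2*(k:ℤ)+1 := by exact_mod_cast congrArg (Nat.cast : ℕ → ℤ) hk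
        have hih : X (-(2*(k:ℤ))) ∈ D.posRoots := by
          have he : (1 : ℤ) - ((d : ℕ) : ℤ) = -(2*(k:ℤ)) := by omega
          rwa [he] at ih
        set w2 := ρ^k * ru with hw2
        have hw2mem : w2 ∈ D.Wgrp := mul_mem (pow_mem hρmem k) hrumem
        have hw2u : (w2 : Module.End ℝ V) u = -(X (-(2*(k:ℤ)))) := by
          rw [hw2, Units.val_mul, Module.End.mul_apply, hruu, map_neg, hXe k]
        have hw2uneg : (w2 : Module.End ℝ V) u ∈ D.negRoots := by
          rw [hw2u]
          exact D.neg_mem_negRoots hih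
        have hdomr := hdom w2 hw2mem hw2uneg
        have hw2v : (w2 : Module.End ℝ V) v = -(X (-(2*(k:ℤ))-1)) := by
          rw [hw2, Units.val_mul, Module.End.mul_apply, ← hX1, hruX 1, map_neg, hρpowX k (-1)]
          congr 2
          ring
        rw [hw2v] at hdomr
        have hpos' : X (-(2*(k:ℤ))-1) ∈ D.posRoots := by
          have : -(-(X (-(2*(k:ℤ))-1))) ∈ D.posRoots := hdomr
          rwa [neg_neg] at this
        have he : (1 : ℤ) - ((d+1 : ℕ) : ℤ) = -(2*(k:ℤ))-1 := by omega
        rwa [he]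
  -- choose n with n·θ ∈ [π, π + θ)
  set n := Nat.ceil (Real.pi / θ) with hn
  have hπθ : Real.pi / θ ≤ (n:ℝ) := Nat.le_ceil _
  have hnlt : (n:ℝ) < Real.pi/θ + 1 := Nat.ceil_lt_add_one (by positivity)
  have h1 : Real.pi ≤ (n:ℝ) * θ := by
    rw [div_le_iff₀ hθpos] at hπθ
    linarith
  have h2 : (n:ℝ) * θ < Real.pi + θ := by
    have h3 : (Real.pi/θ) * θ = Real.pi := by field_simp
    nlinarith
  have hcoef_u : Real.sin ((n:ℝ) * θ) ≤ 0 := by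
    have e := Real.sin_sub_pi ((n:ℝ)*θ)
    have h4 : 0 ≤ Real.sin ((n:ℝ)*θ - Real.pi) :=
      Real.sin_nonneg_of_nonneg_of_le_pi (by linarith) (by linarith)
    linarith
  have hcoef_v : 0 < Real.sin (((n:ℝ) - 1) * θ) := by
    apply Real.sin_pos_of_pos_of_lt_pi
    · nlinarith
    · nlinarith
  have hXcoord : X (1 - (n:ℤ)) = (Real.sin ((n:ℝ)*θ)/Real.sin θ) • u
      + (-(Real.sin (((n:ℝ)-1)*θ)/Real.sin θ)) • v := by
    show dseq θ u v (1 - (n:ℤ)) = _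
    unfold dseq
    push_cast
    rw [show (1 - (1 - (n:ℝ))) * θ = (n:ℝ)*θ from by ring,
      show (1 - (n:ℝ)) * θ = -(((n:ℝ)-1)*θ) from by ring, Real.sin_neg, neg_div]
  have hXneg_plc : -(X (1 - (n:ℤ))) ∈ PLC D.Pi := by
    rw [hXcoord, neg_add, ← neg_smul, ← neg_smul, neg_neg]
    refine PLC.combo hu.2 hv.2 ?_ ?_ ?_
    · have : Real.sin ((n:ℝ)*θ)/Real.sin θ ≤ 0 :=
        div_nonpos_of_nonpos_of_nonneg hcoef_u hsinpos.le
      linarith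
    · positivity
    · rintro ⟨-, h⟩
      have : 0 < Real.sin (((n:ℝ)-1)*θ)/Real.sin θ := div_pos hcoef_v hsinpos
      rw [h] at this
      exact lt_irrefl 0 this
  have hXneg_root : -(X (1 - (n:ℤ))) ∈ D.roots := by
    rcases Nat.even_or_odd n with ⟨k, hk⟩ | ⟨k, hk⟩
    · have he : (1:ℤ) - (n:ℤ) = 1 - 2*(k:ℤ) := by
        have : (n:ℤ) = 2*(k:ℤ) := by exact_mod_cast congrArg (Nat.cast : ℕ → ℤ) (hk.trans (two_mul k).symm)
        omega
      have : -(X (1 - (n:ℤ))) = ((ρ^k : (Module.End ℝ V)ˣ) : Module.End ℝ V) (-v) := by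
        rw [map_neg, hXo k, he]
      rw [this]
      exact D.roots_closed (pow_mem hρmem k) (D.root_neg hv.1)
    · have he : (1:ℤ) - (n:ℤ) = -(2*(k:ℤ)) := by
        have : (n:ℤ) = 2*(k:ℤ)+1 := by exact_mod_cast congrArg (Nat.cast : ℕ → ℤ) hk
        omega
      have : -(X (1 - (n:ℤ))) = ((ρ^k : (Module.End ℝ V)ˣ) : Module.End ℝ V) (-u) := by
        rw [map_neg, hXe k, he]
      rw [this]
      exact D.roots_closed (pow_mem hρmem k) (D.root_neg hu.1)
  have hfinal : X (1 - (n:ℤ)) ∈ D.negRoots := ⟨hXneg_root, hXneg_plc⟩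
  exact D.pos_neg_disjoint (hchain n) hfinal

end CoxeterDatum

end Infra7
/-- Lemma 3.3: reflecting a dominating root in a dominated elementary root. -/
theorem refl_of_dominated_elementary (D : CoxeterDatum V) {x y : V}
    (hx : x ∈ D.roots) (hy : y ∈ D.roots) (hne : x ≠ y) (hdom : D.dom x y)
    (hypos : y ∈ D.posRoots) (hyelem : D.DSet y = ∅) :
    D.refl y x ∈ D.posRoots ∧
    D.B (D.refl y x) x ≤ -1 ∧ D.B (D.refl y x) y ≤ -1 ∧
    ¬ D.dom (D.refl y x) x ∧ ¬ D.dom (D.refl y x) y := by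
  classical
  have h1 : (1 : (Module.End ℝ V)ˣ) ∈ D.Wgrp := one_mem _
  have hxnotneg : x ∉ D.negRoots := by
    intro hxneg
    have h2 := hdom 1 h1 (by simpa using hxneg)
    exact D.pos_neg_disjoint hypos (by simpa using h2)
  have hxpos : x ∈ D.posRoots := D.pos_of_root_not_neg hx hxnotneg
  have hc1 : 1 ≤ D.B x y := D.B_ge_one_of_dom hxpos hypos hdom
  have hBxx : D.B x x = 1 := D.root_norm hx
  have hByy : D.B y y = 1 := D.root_norm hy
  have hBsymm : D.B y x = D.B x y := D.root_symm hy hx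
  set z := D.refl y x with hz
  set ry := D.reflUnit hByy with hry
  have hrymem : ry ∈ D.Wgrp := D.reflUnit_root_mem hy
  have hryx : (ry : Module.End ℝ V) x = z := rfl
  have hzroot : z ∈ D.roots := by
    rw [← hryx]
    exact D.roots_closed hrymem hx
  have hzx : D.B z x ≤ -1 := by
    rw [hz, CoxeterDatum.refl_apply]
    simp only [map_sub, map_smul, LinearMap.sub_apply, LinearMap.smul_apply, smul_eq_mul,
      hBxx, hBsymm]
    nlinarith
  have hzy : D.B z y ≤ -1 := by
    rw [hz, CoxeterDatum.refl_apply]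
    simp only [map_sub, map_smul, LinearMap.sub_apply, LinearMap.smul_apply, smul_eq_mul,
      hByy]
    linarith
  have hzpos : z ∈ D.posRoots := by
    by_contra hzc
    have hzneg : z ∈ D.negRoots := D.neg_of_root_not_pos hzroot hzc
    have h_negz_pos : -z ∈ D.posRoots := hzneg
    have h_ne : -z ≠ y := by
      intro he
      have hzy' : z = -y := by rw [← he, neg_neg]
      have h7 : x - (2 * D.B x y) • y = -y := by
        rw [← hzy', hz, CoxeterDatum.refl_apply]
      have hxeq : x = (2 * D.B x y - 1) • y := by
        rw [sub_eq_iff_eq_add] at h7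
        conv_lhs => rw [h7]
        module
      have h9 : D.B x y = 2 * D.B x y - 1 := by
        conv_lhs => rw [hxeq]
        rw [map_smul, LinearMap.smul_apply, smul_eq_mul, hByy, mul_one]
      have hceq : D.B x y = 1 := by linarith
      apply hne
      rw [hxeq, hceq]
      norm_num
    have h_dom : D.dom y (-z) := by
      intro w hw hwy
      set w' := w * ry with hw'
      have hw'mem : w' ∈ D.Wgrp := mul_mem hw hrymem
      have hw'x : (w' : Module.End ℝ V) x = (w : Module.End ℝ V) z := by
        rw [hw', Units.val_mul, Module.End.mul_apply, hryx]
      have hwz_root : (w : Module.End ℝ V) z ∈ D.roots := D.roots_closed hw hzroot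
      have hwzpos : (w : Module.End ℝ V) z ∈ D.posRoots := by
        by_contra hcon
        have hneg' : (w : Module.End ℝ V) z ∈ D.negRoots :=
          D.neg_of_root_not_pos hwz_root hcon
        have h10 := hdom w' hw'mem (by rw [hw'x]; exact hneg')
        have hw'y : (w' : Module.End ℝ V) y = -((w : Module.End ℝ V) y) := by
          rw [hw', Units.val_mul, Module.End.mul_apply,
            show (ry : Module.End ℝ V) y = -y from D.reflUnit_self hByy, map_neg]
        rw [hw'y] at h10
        have h11 : (w : Module.End ℝ V) y ∈ D.posRoots := by
          have : -(-((w : Module.End ℝ V) y)) ∈ D.posRoots := h10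
          rwa [neg_neg] at this
        exact D.pos_neg_disjoint h11 hwy
      show -((w : Module.End ℝ V) (-z)) ∈ D.posRoots
      rw [map_neg, neg_neg]
      exact hwzpos
    have hmem : -z ∈ D.DSet y := ⟨h_negz_pos, h_ne, h_dom⟩
    rw [hyelem] at hmem
    exact hmem
  refine ⟨hzpos, hzx, hzy, ?_, ?_⟩
  · exact D.not_dom_of_B_nonpos hzpos hxpos (by linarith)
  · exact D.not_dom_of_B_nonpos hzpos hypos (by linarith)
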